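/- Let A be a based quasi-hereditary superalgebra over a field F with heredity data (I,X,Y), let i∈I, and let V be a highest weight module of weight i with highest weight vector v. Then there is a surjective homogeneous A-supermodule homomorphism Δ(i) ↠ V of parity |v|; in particular, e_jV ≠ 0 implies j ≤ i. -/

import Mathlib

/-!
STATEMENT 2: universality of standard modules over a based quasi-hereditary superalgebra
over a field.
-/

open scoped Classical

/-- Heredity data `(I, X, Y)` on a `ℤ/2`-graded `k`-superalgebra `A` (with grading `𝒜`),
making `A` a based quasi-hereditary superalgebra (Kleshchev–Muth).  The sets `X i`, `Y i`
consist of homogeneous elements, with distinguished initial elements `e i ∈ X i ∩ Y i`;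
`B = {x * y | i ∈ I, x ∈ X i, y ∈ Y i}` is a `k`-basis of `A`; left/right multiplication is
triangular modulo `A^{> i} = span {x * y | j > i, x ∈ X j, y ∈ Y j}`; and the idempotent
axioms (c) hold. -/
structure HeredityData (k A : Type) [CommRing k] [Ring A] [Algebra k A]
    (𝒜 : ZMod 2 → Submodule k A)
    (I : Type) [Fintype I] [PartialOrder I] : Type where
  X : I → Finset A
  Y : I → Finset A
  e : I → A
  e_mem_X : ∀ i, e i ∈ X i
  e_mem_Y : ∀ i, e i ∈ Y i
  homog_X : ∀ i, ∀ x ∈ X i, ∃ ε : ZMod 2, x ∈ 𝒜 ε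
  homog_Y : ∀ i, ∀ y ∈ Y i, ∃ ε : ZMod 2, y ∈ 𝒜 ε
  /-- (a): the products `x * y` form a `k`-basis of `A`: they are linearly independent … -/
  basis_indep : LinearIndependent k
    (fun p : Σ i : I, {q : A × A // q ∈ X i ×ˢ Y i} => p.2.1.1 * p.2.1.2)
  /-- (a): … and they span `A`. -/
  basis_span :
    Submodule.span k {a : A | ∃ i, ∃ x ∈ X i, ∃ y ∈ Y i, a = x * y} = ⊤
  /-- (b): `a * x` is, modulo `A^{> i}`, a `k`-linear combination of elements of `X i`. -/
  left_coeffs : ∀ i, ∀ x ∈ X i, ∀ a : A,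
    a * x ∈ Submodule.span k ((X i : Set A) ∪
      {b : A | ∃ j, i < j ∧ ∃ x' ∈ X j, ∃ y' ∈ Y j, b = x' * y'})
  /-- (b): `y * a` is, modulo `A^{> i}`, a `k`-linear combination of elements of `Y i`. -/
  right_coeffs : ∀ i, ∀ y ∈ Y i, ∀ a : A,
    y * a ∈ Submodule.span k ((Y i : Set A) ∪
      {b : A | ∃ j, i < j ∧ ∃ x' ∈ X j, ∃ y' ∈ Y j, b = x' * y'})
  /-- (c): `x * e i = x`. -/
  x_mul_e : ∀ i, ∀ x ∈ X i, x * e i = x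
  /-- (c): `e i * x = δ_{x, e i} x`. -/
  e_mul_x : ∀ i, ∀ x ∈ X i, e i * x = if x = e i then x else 0
  /-- (c): `e i * y = y`. -/
  e_mul_y : ∀ i, ∀ y ∈ Y i, e i * y = y
  /-- (c): `y * e i = δ_{y, e i} y`. -/
  y_mul_e : ∀ i, ∀ y ∈ Y i, y * e i = if y = e i then y else 0
  /-- (c): `e j * x = x` or `0`. -/
  e_mul_x' : ∀ i j, ∀ x ∈ X i, e j * x = x ∨ e j * x = 0
  /-- (c): `y * e j = y` or `0`. -/
  y_mul_e' : ∀ i j, ∀ y ∈ Y i, y * e j = y ∨ y * e j = 0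

variable (F A : Type) [Field F] [Ring A] [Algebra F A]
  (𝒜 : ZMod 2 → Submodule F A)
  (I : Type) [Fintype I] [PartialOrder I]

/-- The (left ideal) `A^{> i}`, generated by the products `x * y` with `x ∈ X j`,
`y ∈ Y j`, `j > i` (it is in fact a two-sided ideal of `A`). -/
def hgtIdeal (H : HeredityData F A 𝒜 I) (i : I) : Submodule A A :=
  Submodule.span A {b : A | ∃ j, i < j ∧ ∃ x ∈ H.X j, ∃ y ∈ H.Y j, b = x * y}

/-- The quotient superalgebra `Ã = A / A^{> i}` as a left `A`-module. -/
abbrev DeltaQuot (H : HeredityData F A 𝒜 I) (i : I) : Type :=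
  A ⧸ hgtIdeal F A 𝒜 I H i

/-- The standard module `Δ(i) = Ã ẽ_i = A · (e i + A^{> i}) ⊆ A / A^{> i}`. -/
def stdDelta (H : HeredityData F A 𝒜 I) (i : I) :
    Submodule A (DeltaQuot F A 𝒜 I H i) :=
  Submodule.span A {Submodule.Quotient.mk (H.e i)}

/-- The induced `ℤ/2`-grading on the standard module `Δ(i)`:  a vector is in the
`ε`-component iff it is the image of an element of `𝒜 ε`. -/
def grDelta (H : HeredityData F A 𝒜 I) (i : I) (ε : ZMod 2) :
    Set ↥(stdDelta F A 𝒜 I H i) :=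
  {q | ∃ a ∈ 𝒜 ε, (Submodule.Quotient.mk a : DeltaQuot F A 𝒜 I H i) = (q : DeltaQuot F A 𝒜 I H i)}

/-- A homogeneous `A`-supermodule homomorphism of parity `δ`:  an `F`-linear map `f`
shifting the gradings by `δ` and satisfying `f (a • x) = (-1)^{|f||a|} a • f x` for
homogeneous `a`. -/
def IsSuperHom (V W : Type) [AddCommGroup V] [Module F V] [Module A V]
    [AddCommGroup W] [Module F W] [Module A W]
    (gV : ZMod 2 → Set V) (gW : ZMod 2 → Set W) (δ : ZMod 2) (f : V →ₗ[F] W) : Prop :=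
  (∀ ε : ZMod 2, ∀ x ∈ gV ε, f x ∈ gW (ε + δ)) ∧
  ∀ ε : ZMod 2, ∀ a ∈ 𝒜 ε, ∀ x : V,
    f (a • x) = (if ε * δ = 1 then -(a • f x) else a • f x)


section SgAux

variable {F A : Type} [Field F] [Ring A] [Algebra F A]

/-- Σ-twist: `a₀ + c • a₁` for a homogeneous decomposition. -/
noncomputable def sg (𝒜 : ZMod 2 → Submodule F A) [GradedAlgebra 𝒜] (c : F) (a : A) : A :=
  (DirectSum.decompose 𝒜 a 0 : A) + c • (DirectSum.decompose 𝒜 a 1 : A)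

variable (𝒜 : ZMod 2 → Submodule F A) [GradedAlgebra 𝒜] {c : F}

theorem sg_add (a b : A) : sg 𝒜 c (a + b) = sg 𝒜 c a + sg 𝒜 c b := by
  simp only [sg, DirectSum.decompose_add, DirectSum.add_apply, Submodule.coe_add, smul_add]
  abel

theorem sg_zero : sg 𝒜 c (0 : A) = 0 := by
  simp [sg]

theorem sg_smul (t : F) (a : A) : sg 𝒜 c (t • a) = t • sg 𝒜 c a := by
  simp only [sg, DirectSum.decompose_smul, DirectSum.smul_apply, SetLike.val_smul, smul_add]
  rw [smul_comm c t]

theorem sg_of_mem0 {a : A} (h : a ∈ 𝒜 0) : sg 𝒜 c a = a := by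
  rw [sg, DirectSum.decompose_of_mem_same 𝒜 h,
    DirectSum.decompose_of_mem_ne 𝒜 h (by decide : (0 : ZMod 2) ≠ 1), smul_zero, add_zero]

theorem sg_of_mem1 {a : A} (h : a ∈ 𝒜 1) : sg 𝒜 c a = c • a := by
  rw [sg, DirectSum.decompose_of_mem_same 𝒜 h,
    DirectSum.decompose_of_mem_ne 𝒜 h (by decide : (1 : ZMod 2) ≠ 0), zero_add]

theorem sg_homog (hc : c * c = 1) {a : A} {ε : ZMod 2} (h : a ∈ 𝒜 ε) :
    ∃ t : F, t * t = 1 ∧ sg 𝒜 c a = t • a := by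
  rcases (by decide : ∀ ε : ZMod 2, ε = 0 ∨ ε = 1) ε with rfl | rfl
  · exact ⟨1, by simp, by rw [sg_of_mem0 𝒜 h, one_smul]⟩
  · exact ⟨c, hc, sg_of_mem1 𝒜 h⟩

theorem decompose_two_sum (a : A) :
    (DirectSum.decompose 𝒜 a 0 : A) + (DirectSum.decompose 𝒜 a 1 : A) = a := by
  conv_rhs => rw [← DirectSum.sum_support_decompose 𝒜 a]
  rw [Finset.sum_subset (Finset.subset_univ (DirectSum.decompose 𝒜 a).support)
    (fun x _ hx => by rw [DFinsupp.notMem_support_iff.1 hx, ZeroMemClass.coe_zero]),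
    show (Finset.univ : Finset (ZMod 2)) = {0, 1} from by decide,
    Finset.sum_insert (by decide), Finset.sum_singleton]

theorem sg_mul (hc : c * c = 1) (a b : A) : sg 𝒜 c (a * b) = sg 𝒜 c a * sg 𝒜 c b := by
  set a0 : A := (DirectSum.decompose 𝒜 a 0 : A) with ha0def
  set a1 : A := (DirectSum.decompose 𝒜 a 1 : A) with ha1def
  set b0 : A := (DirectSum.decompose 𝒜 b 0 : A) with hb0def
  set b1 : A := (DirectSum.decompose 𝒜 b 1 : A) with hb1def
  have ha0 : a0 ∈ 𝒜 0 := SetLike.coe_mem _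
  have ha1 : a1 ∈ 𝒜 1 := SetLike.coe_mem _
  have hb0 : b0 ∈ 𝒜 0 := SetLike.coe_mem _
  have hb1 : b1 ∈ 𝒜 1 := SetLike.coe_mem _
  have h00 : a0 * b0 ∈ 𝒜 0 := by
    have := SetLike.mul_mem_graded ha0 hb0; rwa [show (0 + 0 : ZMod 2) = 0 from by decide] at this
  have h11 : a1 * b1 ∈ 𝒜 0 := by
    have := SetLike.mul_mem_graded ha1 hb1; rwa [show (1 + 1 : ZMod 2) = 0 from by decide] at this
  have h01 : a0 * b1 ∈ 𝒜 1 := by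
    have := SetLike.mul_mem_graded ha0 hb1; rwa [show (0 + 1 : ZMod 2) = 1 from by decide] at this
  have h10 : a1 * b0 ∈ 𝒜 1 := by
    have := SetLike.mul_mem_graded ha1 hb0; rwa [show (1 + 0 : ZMod 2) = 1 from by decide] at this
  have ha : a = a0 + a1 := (decompose_two_sum 𝒜 a).symm
  have hb : b = b0 + b1 := (decompose_two_sum 𝒜 b).symm
  have hsa : sg 𝒜 c a = a0 + c • a1 := rfl
  have hsb : sg 𝒜 c b = b0 + c • b1 := rfl
  calc sg 𝒜 c (a * b) = sg 𝒜 c (a0 * b0) + sg 𝒜 c (a0 * b1) + sg 𝒜 c (a1 * b0)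
        + sg 𝒜 c (a1 * b1) := by
        conv_lhs => rw [ha, hb]
        rw [add_mul, mul_add, mul_add, sg_add, sg_add, sg_add]
        abel
    _ = a0 * b0 + c • (a0 * b1) + c • (a1 * b0) + a1 * b1 := by
        rw [sg_of_mem0 𝒜 h00, sg_of_mem0 𝒜 h11, sg_of_mem1 𝒜 h01, sg_of_mem1 𝒜 h10]
    _ = sg 𝒜 c a * sg 𝒜 c b := by
        rw [hsa, hsb, add_mul, mul_add, mul_add, mul_smul_comm, smul_mul_assoc,
          smul_mul_assoc, mul_smul_comm, smul_smul, hc, one_smul]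
        abel

theorem sg_sg (hc : c * c = 1) (a : A) : sg 𝒜 c (sg 𝒜 c a) = a := by
  have h0 : (DirectSum.decompose 𝒜 a 0 : A) ∈ 𝒜 0 := SetLike.coe_mem _
  have h1 : (DirectSum.decompose 𝒜 a 1 : A) ∈ 𝒜 1 := SetLike.coe_mem _
  have : sg 𝒜 c a = (DirectSum.decompose 𝒜 a 0 : A) + c • (DirectSum.decompose 𝒜 a 1 : A) := rfl
  rw [this, sg_add, sg_smul, sg_of_mem0 𝒜 h0, sg_of_mem1 𝒜 h1, smul_smul, hc, one_smul,
    decompose_two_sum]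

end SgAux

/-- **Universality of standard modules.**  Over a field `F`, if `V` is a
highest weight module of weight `i` with homogeneous highest weight vector `v` of parity
`pv`, then there is a surjective homogeneous `A`-supermodule homomorphism
`Δ(i) ↠ V` of parity `pv`; in particular `e j • V ≠ 0` implies `j ≤ i`. -/
theorem stmt2
    [GradedAlgebra 𝒜]
    (H : HeredityData F A 𝒜 I)
    (V : Type) [AddCommGroup V] [Module F V] [Module A V] [IsScalarTower F A V]
    [Nontrivial V] [Module.Finite A V]
    (𝒱 : ZMod 2 → Submodule F V) [DirectSum.Decomposition 𝒱]
    (hact : ∀ (ε δ : ZMod 2) (a : A) (x : V), a ∈ 𝒜 ε → x ∈ 𝒱 δ → a • x ∈ 𝒱 (ε + δ))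
    (i : I) (v : V) (pv : ZMod 2) (hv : v ∈ 𝒱 pv)
    -- `V` is a highest weight module of weight `i` with highest weight vector `v`:
    (hspan : Submodule.span F (Set.range fun u : V => H.e i • u) = Submodule.span F {v})
    (hgen : Submodule.span A {v} = ⊤)
    (hhigh : ∀ j, i < j → ∀ u : V, H.e j • u = 0) :
    (∃ f : ↥(stdDelta F A 𝒜 I H i) →ₗ[F] V, Function.Surjective f ∧
      IsSuperHom F A 𝒜 ↥(stdDelta F A 𝒜 I H i) V
        (grDelta F A 𝒜 I H i) (fun ε => (𝒱 ε : Set V)) pv f) ∧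
    ∀ j, (∃ u : V, H.e j • u ≠ 0) → j ≤ i := by
  classical
  set c : F := if pv = 1 then (-1 : F) else 1 with hcdef
  have hcc : c * c = 1 := by
    rw [hcdef]; by_cases h : pv = 1 <;> simp [h]
  have hv0 : v ≠ 0 := by
    rintro rfl
    rw [Submodule.span_zero_singleton] at hgen
    exact absurd hgen bot_ne_top
  have hee : H.e i * H.e i = H.e i := by
    simpa using H.e_mul_x i (H.e i) (H.e_mem_X i)
  -- `e i • v = v`
  have hmemv : ∀ u : V, H.e i • u ∈ Submodule.span F ({v} : Set V) := by
    intro u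
    rw [← hspan]
    exact Submodule.subset_span ⟨u, rfl⟩
  have hidem : ∀ u : V, H.e i • (H.e i • u) = H.e i • u := by
    intro u; rw [← mul_smul, hee]
  have hev : H.e i • v = v := by
    obtain ⟨t, ht⟩ := Submodule.mem_span_singleton.1 (hmemv v)
    by_cases ht0 : t = 0
    · exfalso
      have hz : ∀ u : V, H.e i • u = 0 := by
        intro u
        obtain ⟨s, hs⟩ := Submodule.mem_span_singleton.1 (hmemv u)
        have h2 := hidem u
        rw [← hs, smul_comm, ← ht, ht0, zero_smul, smul_zero] at h2
        rw [← hs, ← h2]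
      have hvmem : v ∈ Submodule.span F (Set.range fun u : V => H.e i • u) := by
        rw [hspan]; exact Submodule.mem_span_singleton_self v
      have hr : (Set.range fun u : V => H.e i • u) ⊆ (⊥ : Submodule F V) := by
        rintro _ ⟨u, rfl⟩; simpa using hz u
      have := (Submodule.span_le.2 hr) hvmem
      exact hv0 (by simpa using this)
    · have h2 := hidem v
      rw [← ht, smul_comm, ← ht] at h2
      have h3 : t • v = v := smul_right_injective V ht0 h2
      rw [← ht, h3]
  -- the ideal annihilates V
  have hgenann : ∀ w ∈ {b : A | ∃ j, i < j ∧ ∃ x ∈ H.X j, ∃ y ∈ H.Y j, b = x * y},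
      ∀ u : V, w • u = 0 := by
    rintro w ⟨j, hij, x, hx, y, hy, rfl⟩ u
    have h1 : y • u = 0 := by
      rw [← H.e_mul_y j y hy, mul_smul]
      exact hhigh j hij _
    rw [mul_smul, h1, smul_zero]
  have hann : ∀ w ∈ hgtIdeal F A 𝒜 I H i, ∀ u : V, w • u = 0 := by
    intro w hw
    induction hw using Submodule.span_induction with
    | mem x hx => exact hgenann x hx
    | zero => exact fun u => zero_smul A u
    | add x y hx hy ihx ihy => exact fun u => by rw [add_smul, ihx u, ihy u, add_zero]
    | smul a x hx ih => exact fun u => by rw [smul_eq_mul, mul_smul, ih u, smul_zero]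
  have hsgann : ∀ w ∈ hgtIdeal F A 𝒜 I H i, ∀ u : V, sg 𝒜 c w • u = 0 := by
    intro w hw
    induction hw using Submodule.span_induction with
    | mem w hw =>
      obtain ⟨j, hij, x, hx, y, hy, rfl⟩ := hw
      obtain ⟨εx, hεx⟩ := H.homog_X j x hx
      obtain ⟨εy, hεy⟩ := H.homog_Y j y hy
      obtain ⟨s, _, hsx⟩ := sg_homog 𝒜 hcc hεx
      obtain ⟨r, _, hry⟩ := sg_homog 𝒜 hcc hεy
      intro u
      rw [sg_mul 𝒜 hcc, hsx, hry, smul_mul_assoc, mul_smul_comm, smul_smul, smul_assoc,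
        hgenann (x * y) ⟨j, hij, x, hx, y, hy, rfl⟩ u, smul_zero]
    | zero => exact fun u => by rw [sg_zero, zero_smul]
    | add x y hx hy ihx ihy => exact fun u => by rw [sg_add, add_smul, ihx u, ihy u, add_zero]
    | smul a x hx ih =>
      exact fun u => by rw [smul_eq_mul, sg_mul 𝒜 hcc, mul_smul, ih u, smul_zero]
  -- the F-linear lift
  let φ : A →ₗ[F] V :=
    { toFun := fun a => sg 𝒜 c a • v
      map_add' := fun a b => by rw [sg_add, add_smul]
      map_smul' := fun t a => by rw [sg_smul, smul_assoc]; rfl }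
  have hker : Submodule.restrictScalars F (hgtIdeal F A 𝒜 I H i) ≤ LinearMap.ker φ := by
    intro w hw
    exact LinearMap.mem_ker.2 (hsgann w hw v)
  let g : DeltaQuot F A 𝒜 I H i →ₗ[F] V :=
    (Submodule.liftQ (Submodule.restrictScalars F (hgtIdeal F A 𝒜 I H i)) φ hker).comp
      ((Submodule.Quotient.restrictScalarsEquiv F (hgtIdeal F A 𝒜 I H i)).symm.toLinearMap)
  have hg : ∀ a : A, g (Submodule.Quotient.mk a) = sg 𝒜 c a • v := by
    intro a
    simp only [g, LinearMap.coe_comp, LinearEquiv.coe_coe, Function.comp_apply,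
      Submodule.Quotient.restrictScalarsEquiv_symm_mk, Submodule.liftQ_apply]
    rfl
  let f : ↥(stdDelta F A 𝒜 I H i) →ₗ[F] V :=
    { toFun := fun x => g (x : DeltaQuot F A 𝒜 I H i)
      map_add' := fun x y => by rw [Submodule.coe_add, map_add]
      map_smul' := fun t x => by rw [Submodule.coe_smul_of_tower, map_smul]; rfl }
  have hfval : ∀ x : ↥(stdDelta F A 𝒜 I H i), f x = g (x : DeltaQuot F A 𝒜 I H i) :=
    fun _ => rfl
  have hfA : ∀ (a : A) (x : ↥(stdDelta F A 𝒜 I H i)), f (a • x) = sg 𝒜 c a • f x := by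
    intro a x
    obtain ⟨b, hb⟩ := Submodule.Quotient.mk_surjective _ (x : DeltaQuot F A 𝒜 I H i)
    have hfx : f x = sg 𝒜 c b • v := by rw [hfval, ← hb, hg]
    have hcoe : ((a • x : ↥(stdDelta F A 𝒜 I H i)) : DeltaQuot F A 𝒜 I H i)
        = a • (x : DeltaQuot F A 𝒜 I H i) := rfl
    rw [hfval, hcoe, ← hb, ← Submodule.Quotient.mk_smul, smul_eq_mul, hg, sg_mul 𝒜 hcc,
      mul_smul, hfx]
  have hmkE : (Submodule.Quotient.mk (H.e i) : DeltaQuot F A 𝒜 I H i)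
      ∈ stdDelta F A 𝒜 I H i :=
    Submodule.mem_span_singleton_self _
  obtain ⟨εe, hεe⟩ := H.homog_X i (H.e i) (H.e_mem_X i)
  obtain ⟨te, htte, hte⟩ := sg_homog 𝒜 hcc hεe
  have hfe : f ⟨_, hmkE⟩ = te • v := by
    rw [hfval, hg, hte, smul_assoc, hev]
  have hsurj : Function.Surjective f := by
    intro u
    have hu : u ∈ Submodule.span A ({v} : Set V) := hgen ▸ Submodule.mem_top
    obtain ⟨a, ha⟩ := Submodule.mem_span_singleton.1 hu
    refine ⟨(te • sg 𝒜 c a) • ⟨_, hmkE⟩, ?_⟩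
    rw [hfA, sg_smul, sg_sg 𝒜 hcc, hfe, smul_assoc, smul_comm a te, smul_smul, htte,
      one_smul, ha]
  refine ⟨⟨f, hsurj, ?_, ?_⟩, ?_⟩
  · -- grading condition
    intro ε x hx
    obtain ⟨a, ha, hax⟩ := hx
    have hfx : f x = sg 𝒜 c a • v := by rw [hfval, ← hax, hg]
    obtain ⟨t, htt, hta⟩ := sg_homog 𝒜 hcc ha
    rw [hfx, hta, smul_assoc]
    exact SetLike.mem_coe.2 (Submodule.smul_mem _ t (hact ε pv a v ha hv))
  · -- super-equivariance
    intro ε a ha x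
    rw [hfA a x]
    rcases (by decide : ∀ ε : ZMod 2, ε = 0 ∨ ε = 1) ε with rfl | rfl
    · rw [sg_of_mem0 𝒜 ha, if_neg (by rw [zero_mul]; decide)]
    · rw [sg_of_mem1 𝒜 ha, one_mul]
      by_cases hpv : pv = 1
      · rw [if_pos hpv, hcdef, if_pos hpv, smul_assoc, neg_one_smul]
      · rw [if_neg hpv, hcdef, if_neg hpv, one_smul]
  · -- e j • V ≠ 0 → j ≤ i
    have hrange : {a : A | ∃ i, ∃ x ∈ H.X i, ∃ y ∈ H.Y i, a = x * y}
        = Set.range (fun pq : Σ i : I, {q : A × A // q ∈ H.X i ×ˢ H.Y i} =>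
            pq.2.1.1 * pq.2.1.2) := by
      ext a
      constructor
      · rintro ⟨i', x, hx, y, hy, rfl⟩
        exact ⟨⟨i', ⟨(x, y), Finset.mem_product.2 ⟨hx, hy⟩⟩⟩, rfl⟩
      · rintro ⟨⟨i', ⟨⟨x, y⟩, hq⟩⟩, rfl⟩
        obtain ⟨hx, hy⟩ := Finset.mem_product.1 hq
        exact ⟨i', x, hx, y, hy, rfl⟩
    let bas : Module.Basis (Σ i : I, {q : A × A // q ∈ H.X i ×ˢ H.Y i}) F A :=
      Module.Basis.mk H.basis_indep (by rw [← hrange]; exact H.basis_span.ge)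
    intro j hj
    obtain ⟨u, hu⟩ := hj
    have hu' : u ∈ Submodule.span A ({v} : Set V) := hgen ▸ Submodule.mem_top
    obtain ⟨a, ha⟩ := Submodule.mem_span_singleton.1 hu'
    have hne : (H.e j * (a * H.e i)) • v ≠ 0 := by
      rw [mul_smul, mul_smul, hev, ha]
      exact hu
    have hex : ∃ x ∈ H.X i, H.e j * x = x := by
      by_contra hno
      push_neg at hno
      have hzero : ∀ x ∈ H.X i, H.e j * x = 0 := by
        intro x hx
        rcases H.e_mul_x' i j x hx with h | h
        · exact absurd h (hno x hx)
        · exact h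
      let L : A →ₗ[F] V :=
        { toFun := fun b => (H.e j * b) • v
          map_add' := fun b1 b2 => by rw [mul_add, add_smul]
          map_smul' := fun t b => by rw [mul_smul_comm, smul_assoc]; rfl }
      have hL : Submodule.span F ((H.X i : Set A) ∪
          {b : A | ∃ j', i < j' ∧ ∃ x' ∈ H.X j', ∃ y' ∈ H.Y j', b = x' * y'})
          ≤ LinearMap.ker L := by
        rw [Submodule.span_le]
        rintro b (hb | hb)
        · refine LinearMap.mem_ker.2 ?_
          show (H.e j * b) • v = 0
          rw [hzero b (Finset.mem_coe.1 hb), zero_smul]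
        · refine LinearMap.mem_ker.2 ?_
          show (H.e j * b) • v = 0
          rw [mul_smul, hgenann b hb v, smul_zero]
      have hm := hL (H.left_coeffs i (H.e i) (H.e_mem_X i) a)
      exact hne (LinearMap.mem_ker.1 hm)
    obtain ⟨x, hx, hjx⟩ := hex
    have hp0mem : ((x, H.e i) : A × A) ∈ H.X i ×ˢ H.Y i :=
      Finset.mem_product.2 ⟨hx, H.e_mem_Y i⟩
    have hbp0 : bas ⟨i, ⟨(x, H.e i), hp0mem⟩⟩ = x := by
      rw [Module.Basis.mk_apply]
      exact H.x_mul_e i x hx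
    have hxT : x ∈ Submodule.span F
        (bas '' {p : Σ i : I, {q : A × A // q ∈ H.X i ×ˢ H.Y i} | j ≤ p.1}) := by
      have h1 := H.right_coeffs j (H.e j) (H.e_mem_Y j) x
      rw [hjx] at h1
      refine Submodule.span_mono ?_ h1
      rintro b (hb | hb)
      · refine ⟨⟨j, ⟨(H.e j, b), Finset.mem_product.2 ⟨H.e_mem_X j, Finset.mem_coe.1 hb⟩⟩⟩,
          le_refl j, ?_⟩
        rw [Module.Basis.mk_apply]
        exact H.e_mul_y j b (Finset.mem_coe.1 hb)
      · obtain ⟨j', hjj', x', hx', y', hy', rfl⟩ := hb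
        exact ⟨⟨j', ⟨(x', y'), Finset.mem_product.2 ⟨hx', hy'⟩⟩⟩, le_of_lt hjj',
          by rw [Module.Basis.mk_apply]⟩
    rw [← hbp0] at hxT
    have hsupp := bas.mem_span_image.1 hxT
    rw [Module.Basis.repr_self] at hsupp
    have hp0 : (⟨i, ⟨(x, H.e i), hp0mem⟩⟩ : Σ i : I, {q : A × A // q ∈ H.X i ×ˢ H.Y i})
        ∈ {p : Σ i : I, {q : A × A // q ∈ H.X i ×ˢ H.Y i} | j ≤ p.1} :=
      hsupp (by simp [Finsupp.support_single_ne_zero])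
    exact hp0
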